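/- Generalized Gronwall with singular kernel: Let γ ∈ (0,1], a, K ≥ 0, μ > 0, ε > 0, and let z : [0,T] → [0,∞) be continuous and satisfy z(t) ≤ a + K ∫₀ᵗ ε^{−γ}(t−s)^{γ−1} e^{−ε^{−1}μ(t−s)} z(s) ds for all t ∈ [0,T]. If K Γ(γ) μ^{−γ} < 1, then z(t) ≤ a / (1 − K Γ(γ) μ^{−γ}) for all t ∈ [0,T]. -/

import Mathlib

open Set MeasureTheory Real

/-- Generalized Gronwall lemma with singular kernel: if `z ≥ 0` is continuous on
`[0,T]` and `z(t) ≤ a + K ∫₀ᵗ ε^{-γ}(t-s)^{γ-1} e^{-ε⁻¹μ(t-s)} z(s) ds`, and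
`K Γ(γ) μ^{-γ} < 1`, then `z(t) ≤ a / (1 - K Γ(γ) μ^{-γ})` on `[0,T]`. -/
theorem stmt14 (γ a K μ ε T : ℝ) (hγ : γ ∈ Set.Ioc (0:ℝ) 1)
    (ha : 0 ≤ a) (hK : 0 ≤ K) (hμ : 0 < μ) (hε : 0 < ε) (hT : 0 ≤ T)
    (z : ℝ → ℝ) (hz : ContinuousOn z (Set.Icc 0 T))
    (hznn : ∀ t ∈ Set.Icc (0:ℝ) T, 0 ≤ z t)
    (hineq : ∀ t ∈ Set.Icc (0:ℝ) T,
      z t ≤ a + K * ∫ s in (0:ℝ)..t,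
        ε ^ (-γ) * (t - s) ^ (γ - 1) * Real.exp (-ε⁻¹ * μ * (t - s)) * z s)
    (hcontr : K * Real.Gamma γ * μ ^ (-γ) < 1) :
    ∀ t ∈ Set.Icc (0:ℝ) T, z t ≤ a / (1 - K * Real.Gamma γ * μ ^ (-γ)) := by
  obtain ⟨hγ0, hγ1⟩ := hγ
  have hr0 : (0:ℝ) < ε⁻¹ * μ := by positivity
  have hΓ : 0 < Real.Gamma γ := Real.Gamma_pos_of_pos hγ0
  set ρ : ℝ := K * Real.Gamma γ * μ ^ (-γ) with hρdef
  have hρ0 : 0 ≤ ρ := by positivity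
  have h1ρ : 0 < 1 - ρ := by linarith
  -- the kernel as a function of u = t - s
  set F : ℝ → ℝ := fun u => ε ^ (-γ) * u ^ (γ - 1) * Real.exp (-ε⁻¹ * μ * u) with hFdef
  have hFnn : ∀ u, 0 ≤ u → 0 ≤ F u := by
    intro u hu; simp only [hFdef]
    have : 0 ≤ u ^ (γ - 1) := Real.rpow_nonneg hu _
    positivity
  have hF : IntegrableOn F (Set.Ioi 0) := by
    have h1 := integrableOn_rpow_mul_exp_neg_mul_rpow (s := γ - 1) (p := 1)
      (b := ε⁻¹ * μ) (by linarith) one_pos hr0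
    have h2 : IntegrableOn
        (fun x : ℝ => ε ^ (-γ) * (x ^ (γ - 1) * Real.exp (-(ε⁻¹ * μ) * x ^ (1:ℝ))))
        (Set.Ioi 0) := h1.const_mul _
    refine h2.congr_fun (fun x _ => ?_) measurableSet_Ioi
    beta_reduce; rw [Real.rpow_one]; simp only [hFdef]; ring_nf
  have hFval : ∫ u in Set.Ioi (0:ℝ), F u = Real.Gamma γ * μ ^ (-γ) := by
    have h2 : ∫ u in Set.Ioi (0:ℝ), F u
        = ε ^ (-γ) * ∫ u in Set.Ioi (0:ℝ), u ^ (γ - 1) * Real.exp (-(ε⁻¹ * μ * u)) := by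
      rw [← integral_const_mul]
      refine setIntegral_congr_fun measurableSet_Ioi (fun x _ => ?_)
      simp only [hFdef]; ring_nf
    rw [h2, integral_rpow_mul_exp_neg_mul_Ioi hγ0 hr0]
    have h1r : (1 / (ε⁻¹ * μ) : ℝ) = ε / μ := by field_simp
    rw [h1r, Real.div_rpow hε.le hμ.le, Real.rpow_neg hε.le, Real.rpow_neg hμ.le]
    have hεγ : (0:ℝ) < ε ^ γ := Real.rpow_pos_of_pos hε γ
    field_simp
  -- interval integral bound for the kernel
  have hkerbd : ∀ t, 0 ≤ t → (∫ s in (0:ℝ)..t, F (t - s)) ≤ Real.Gamma γ * μ ^ (-γ) := by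
    intro t ht0
    rw [intervalIntegral.integral_comp_sub_left F t, sub_self, sub_zero,
      intervalIntegral.integral_of_le ht0]
    rw [← hFval]
    refine setIntegral_mono_set hF
      ((ae_restrict_iff' measurableSet_Ioi).mpr
        (Filter.Eventually.of_forall fun u hu => hFnn u hu.le))
      (Filter.Eventually.of_forall fun u hu => Set.Ioc_subset_Ioi_self hu)
  have hFii : ∀ t, 0 ≤ t → IntervalIntegrable (fun s => F (t - s)) volume 0 t := by
    intro t ht0
    have h1 : IntervalIntegrable F volume 0 t :=
      (intervalIntegrable_iff_integrableOn_Ioc_of_le ht0).mpr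
        (hF.mono_set Set.Ioc_subset_Ioi_self)
    simpa using (h1.comp_sub_left t).symm
  -- the max of z on [0,T]
  obtain ⟨t₀, ht₀, hmax⟩ := isCompact_Icc.exists_isMaxOn (Set.nonempty_Icc.mpr hT) hz
  set M : ℝ := z t₀ with hMdef
  have hM0 : 0 ≤ M := hznn t₀ ht₀
  have hzM : ∀ s ∈ Set.Icc (0:ℝ) T, z s ≤ M := fun s hs => hmax hs
  -- bound the integral at t₀
  have ht₀0 : 0 ≤ t₀ := ht₀.1
  have hsub : Set.Icc (0:ℝ) t₀ ⊆ Set.Icc 0 T := Set.Icc_subset_Icc le_rfl ht₀.2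
  have hker := hFii t₀ ht₀0
  have hkz : IntervalIntegrable (fun s => F (t₀ - s) * z s) volume 0 t₀ := by
    refine hker.mul_continuousOn ?_
    rw [Set.uIcc_of_le ht₀0]
    exact hz.mono hsub
  have hbound : (∫ s in (0:ℝ)..t₀, F (t₀ - s) * z s) ≤ M * (Real.Gamma γ * μ ^ (-γ)) := by
    calc (∫ s in (0:ℝ)..t₀, F (t₀ - s) * z s)
        ≤ ∫ s in (0:ℝ)..t₀, F (t₀ - s) * M := by
          refine intervalIntegral.integral_mono_on ht₀0 hkz (hker.mul_const M) ?_
          intro s hs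
          exact mul_le_mul_of_nonneg_left (hzM s (hsub hs)) (hFnn _ (by linarith [hs.2]))
      _ = (∫ s in (0:ℝ)..t₀, F (t₀ - s)) * M := by rw [intervalIntegral.integral_mul_const]
      _ ≤ (Real.Gamma γ * μ ^ (-γ)) * M := by
          exact mul_le_mul_of_nonneg_right (hkerbd t₀ ht₀0) hM0
      _ = M * (Real.Gamma γ * μ ^ (-γ)) := mul_comm _ _
  have hMle : M ≤ a + ρ * M := by
    have h1 := hineq t₀ ht₀
    have h2 : (∫ s in (0:ℝ)..t₀,
        ε ^ (-γ) * (t₀ - s) ^ (γ - 1) * Real.exp (-ε⁻¹ * μ * (t₀ - s)) * z s)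
        = ∫ s in (0:ℝ)..t₀, F (t₀ - s) * z s := rfl
    rw [h2] at h1
    have h3 : K * (∫ s in (0:ℝ)..t₀, F (t₀ - s) * z s) ≤ K * (M * (Real.Gamma γ * μ ^ (-γ))) :=
      mul_le_mul_of_nonneg_left hbound hK
    calc M ≤ a + K * (∫ s in (0:ℝ)..t₀, F (t₀ - s) * z s) := h1
      _ ≤ a + K * (M * (Real.Gamma γ * μ ^ (-γ))) := by linarith
      _ = a + ρ * M := by rw [hρdef]; ring
  have hMfin : M ≤ a / (1 - ρ) := by
    rw [le_div_iff₀ h1ρ]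
    nlinarith
  intro t ht
  exact le_trans (hzM t ht) hMfin
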